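/- Fix points z_1, ..., z_n ∈ ℝ^d and u_1, ..., u_k ∈ ℝ^d, and let P* ∈ B(n,k) be any minimizer of P ↦ Σ_{i,j} ‖z_i − u_j‖_2^2 P_{ij} over the scaled Birkhoff polytope B(n,k). Then there exists a convex function Φ : ℝ^d → ℝ such that for every i ∈ {1,...,n}: (a) u_j is a subgradient of Φ at z_i for every j with P*_{ij} > 0, and (b) the barycenter n Σ_{j=1}^k P*_{ij} u_j is a subgradient of Φ at z_i. -/

import Mathlib

open RealInnerProductSpace

/-- The scaled Birkhoff polytope `B(n,k)`: nonnegative matrices whose rows sum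
to `1/n` and whose columns sum to `1/k`. -/
def scaledBirkhoff (n k : ℕ) : Set (Matrix (Fin n) (Fin k) ℝ) :=
  {P | (∀ i j, 0 ≤ P i j) ∧ (∀ i, ∑ j, P i j = 1 / n) ∧ (∀ j, ∑ i, P i j = 1 / k)}
set_option linter.unusedSectionVars false
set_option linter.unusedTactic false
namespace BirkhoffAux

variable {α : Type*}

/-- Sum of edge weights along a walk given as the list of its vertices. -/
def wsum (w : α → α → ℝ) : List α → ℝ
  | [] => 0
  | [_] => 0
  | a :: b :: t => w a b + wsum w (b :: t)

lemma wsum_append_cons (w : α → α → ℝ) :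
    ∀ (s : List α) (a : α) (t : List α),
      wsum w (s ++ a :: t) = wsum w (s ++ [a]) + wsum w (a :: t)
  | [], a, t => by simp [wsum]
  | [x], a, t => by simp [wsum]
  | x :: y :: s, a, t => by
    have h := wsum_append_cons w (y :: s) a t
    simp only [List.cons_append, wsum, List.append_eq] at h ⊢
    rw [h]; ring

lemma wsum_le_length (w : α → α → ℝ) {M : ℝ} (hM0 : 0 ≤ M) (hM : ∀ a b, w a b ≤ M) :
    ∀ l : List α, wsum w l ≤ (l.length - 1 : ℕ) * M
  | [] => by simp [wsum]
  | [a] => by simp [wsum]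
  | a :: b :: t => by
    have h := wsum_le_length w hM0 hM (b :: t)
    simp only [wsum, List.length_cons, Nat.add_sub_cancel] at h ⊢
    have := hM a b
    push_cast
    push_cast at h
    nlinarith




variable {α : Type*} [Fintype α] [DecidableEq α]

lemma exists_dup_split : ∀ {l : List α}, ¬ l.Nodup →
    ∃ (a : α) (l1 l2 l3 : List α), l = l1 ++ a :: l2 ++ a :: l3 := by
  intro l
  induction l with
  | nil => intro h; exact absurd List.nodup_nil h
  | cons x t ih =>
    intro h
    rw [List.nodup_cons] at h
    push_neg at h
    by_cases hx : x ∈ t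
    · obtain ⟨s, t', rfl⟩ := List.append_of_mem hx
      exact ⟨x, [], s, t', by simp⟩
    · obtain ⟨a, l1, l2, l3, rfl⟩ := ih (h hx)
      exact ⟨a, x :: l1, l2, l3, by simp⟩

lemma wsum_le_bound (w : α → α → ℝ) {M : ℝ} (hM0 : 0 ≤ M) (hM : ∀ a b, w a b ≤ M)
    (hcyc : ∀ (a : α) (l : List α), wsum w (a :: (l ++ [a])) ≤ 0) :
    ∀ (N : ℕ) (l : List α), l.length ≤ N → wsum w l ≤ (Fintype.card α) * M := by
  intro N
  induction N with
  | zero =>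
    intro l hl
    rw [List.length_eq_zero_iff.mp (Nat.le_zero.mp hl)]
    simpa [wsum] using mul_nonneg (Nat.cast_nonneg _) hM0
  | succ N ih =>
    intro l hl
    by_cases hlen : l.length ≤ Fintype.card α + 1
    · calc wsum w l ≤ (l.length - 1 : ℕ) * M := wsum_le_length w hM0 hM l
        _ ≤ (Fintype.card α) * M := by
            apply mul_le_mul_of_nonneg_right _ hM0
            have hle : l.length - 1 ≤ Fintype.card α := by omega
            exact_mod_cast hle
    · push_neg at hlen
      have hnd : ¬ l.Nodup := fun hnd => by
        have := hnd.length_le_card; omega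
      obtain ⟨a, l1, l2, l3, rfl⟩ := exists_dup_split hnd
      have e1 : wsum w (l1 ++ a :: l2 ++ a :: l3)
          = wsum w (l1 ++ [a]) + wsum w (a :: (l2 ++ a :: l3)) := by
        rw [show l1 ++ a :: l2 ++ a :: l3 = l1 ++ a :: (l2 ++ a :: l3) by simp]
        exact wsum_append_cons w l1 a (l2 ++ a :: l3)
      have e2 : wsum w (a :: (l2 ++ a :: l3))
          = wsum w ((a :: l2) ++ [a]) + wsum w (a :: l3) := by
        have := wsum_append_cons w (a :: l2) a l3
        simpa using this
      have e3 : wsum w (l1 ++ [a]) + wsum w (a :: l3) = wsum w (l1 ++ a :: l3) :=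
        (wsum_append_cons w l1 a l3).symm
      have hc : wsum w ((a :: l2) ++ [a]) ≤ 0 := by simpa using hcyc a l2
      have hshort : (l1 ++ a :: l3).length ≤ N := by
        simp only [List.length_append, List.length_cons] at hl ⊢
        omega
      have := ih (l1 ++ a :: l3) hshort
      linarith [e1, e2, e3, this]

lemma exists_potential [Nonempty α] (w : α → α → ℝ)
    (hcyc : ∀ (a : α) (l : List α), wsum w (a :: (l ++ [a])) ≤ 0) :
    ∃ g : α → ℝ, ∀ a b, g a + w a b ≤ g b := by
  obtain ⟨M0, hM0⟩ := Finset.exists_max_image (Finset.univ ×ˢ Finset.univ)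
    (fun p : α × α => w p.1 p.2) (by simp)
  set M : ℝ := max 0 (w M0.1 M0.2) with hMdef
  have hM0' : 0 ≤ M := le_max_left _ _
  have hM : ∀ a b, w a b ≤ M := fun a b =>
    le_trans (hM0.2 (a, b) (by simp)) (le_max_right _ _)
  have hbd : ∀ l : List α, wsum w l ≤ (Fintype.card α) * M := fun l =>
    wsum_le_bound w hM0' hM hcyc l.length l le_rfl
  set g : α → ℝ := fun a => sSup (Set.range (fun l : List α => wsum w (l ++ [a]))) with hg
  have hne : ∀ a, (Set.range (fun l : List α => wsum w (l ++ [a]))).Nonempty :=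
    fun a => ⟨wsum w ([] ++ [a]), ⟨[], rfl⟩⟩
  have hbdd : ∀ a, BddAbove (Set.range (fun l : List α => wsum w (l ++ [a]))) :=
    fun a => ⟨(Fintype.card α) * M, by rintro x ⟨l, rfl⟩; exact hbd _⟩
  refine ⟨g, fun a b => ?_⟩
  have : g a ≤ g b - w a b := by
    apply csSup_le (hne a)
    rintro x ⟨l, rfl⟩
    rw [le_sub_iff_add_le]
    have heq : wsum w (l ++ [a]) + w a b = wsum w ((l ++ [a]) ++ [b]) := by
      have := wsum_append_cons w l a [b]
      simp only [wsum] at this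
      rw [show (l ++ [a]) ++ [b] = l ++ a :: [b] by simp, this]
      ring
    rw [heq]
    exact le_csSup (hbdd b) ⟨l ++ [a], rfl⟩
  linarith






lemma zip_cons_sum (w : α → α → ℝ) :
    ∀ (l : List α) (a b : α),
      (((a :: l).zip (l ++ [b])).map (fun p => w p.1 p.2)).sum = wsum w (a :: (l ++ [b]))
  | [], a, b => by simp [wsum]
  | x :: l, a, b => by
    have h := zip_cons_sum w l x b
    simp only [List.cons_append, List.zip_cons_cons, List.map_cons, List.sum_cons, wsum] at h ⊢
    rw [h]

lemma wsum_eq_zip_rotate (w : α → α → ℝ) (a : α) (l : List α) :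
    wsum w (a :: (l ++ [a]))
      = (((a :: l).zip ((a :: l).rotate 1)).map (fun p => w p.1 p.2)).sum := by
  rw [List.rotate_cons_succ, List.rotate_zero, zip_cons_sum]

lemma list_sum_map_sub {γ : Type*} (l : List γ) (f g : γ → ℝ) :
    (l.map (fun e => f e - g e)).sum = (l.map f).sum - (l.map g).sum := by
  induction l with
  | nil => simp
  | cons x t ih => simp [ih]; ring

lemma finset_sum_list_sum {β γ : Type*} (s : Finset β) (l : List γ) (f : β → γ → ℝ) :
    ∑ j ∈ s, (l.map (f j)).sum = (l.map (fun e => ∑ j ∈ s, f j e)).sum := by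
  induction l with
  | nil => simp
  | cons x t ih => simp [Finset.sum_add_distrib, ih]

lemma zip_rotate_snd_sum (c : List α) (f : α → ℝ) :
    ((c.zip (c.rotate 1)).map (fun e => f e.2)).sum
      = ((c.zip (c.rotate 1)).map (fun e => f e.1)).sum := by
  have h1 : (c.zip (c.rotate 1)).map (fun e => f e.2)
      = ((c.zip (c.rotate 1)).map Prod.snd).map f := by simp [List.map_map, Function.comp]
  have h2 : (c.zip (c.rotate 1)).map (fun e => f e.1)
      = ((c.zip (c.rotate 1)).map Prod.fst).map f := by simp [List.map_map, Function.comp]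
  rw [h1, h2, List.map_fst_zip (by simp), List.map_snd_zip (by simp)]
  exact ((c.rotate_perm 1).map f).sum_eq

end BirkhoffAux

namespace BirkhoffAux

lemma double_sum_ite {n k : ℕ} (C : Fin n → Fin k → ℝ) (i0 : Fin n) (j0 : Fin k) :
    ∑ i, ∑ j, C i j * (if i0 = i ∧ j0 = j then (1:ℝ) else 0) = C i0 j0 := by
  simp [ite_and, mul_ite, mul_one, mul_zero, Finset.sum_ite_eq, Fintype.sum_ite_eq]

lemma exchange {d n k : ℕ} (z : Fin n → EuclideanSpace ℝ (Fin d))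
    (u : Fin k → EuclideanSpace ℝ (Fin d))
    (P : Matrix (Fin n) (Fin k) ℝ) (hP : P ∈ scaledBirkhoff n k)
    (hopt : ∀ Q ∈ scaledBirkhoff n k,
      ∑ i, ∑ j, ‖z i - u j‖ ^ 2 * P i j ≤ ∑ i, ∑ j, ‖z i - u j‖ ^ 2 * Q i j)
    (ι : Fin k → Fin k → Fin n) (hι : ∀ j j', 0 < P (ι j j') j)
    (c : List (Fin k)) :
    0 ≤ ((c.zip (c.rotate 1)).map
      (fun e => ‖z (ι e.1 e.2) - u e.2‖ ^ 2 - ‖z (ι e.1 e.2) - u e.1‖ ^ 2)).sum := by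
  set C : Fin n → Fin k → ℝ := fun i j => ‖z i - u j‖ ^ 2 with hC
  set E : List (Fin k × Fin k) := c.zip (c.rotate 1) with hE
  rcases eq_or_ne E [] with hE0 | hE0
  · simp [hE0]
  -- E is nonempty, so Fin k is nonempty
  obtain ⟨e0, he0⟩ := List.exists_mem_of_ne_nil E hE0
  haveI : Nonempty (Fin k) := ⟨e0.1⟩
  haveI : Nonempty (Fin n) := ⟨ι e0.1 e0.2⟩
  set L : ℕ := E.length with hL
  have hLpos : 0 < L := List.length_pos_iff.mpr hE0
  set δ : ℝ := Finset.univ.inf' (Finset.univ_nonempty)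
    (fun p : Fin k × Fin k => P (ι p.1 p.2) p.1) with hδ
  have hδpos : 0 < δ := by
    rw [hδ, Finset.lt_inf'_iff]
    exact fun p _ => hι p.1 p.2
  have hδle : ∀ (j j' : Fin k), δ ≤ P (ι j j') j := fun j j' =>
    Finset.inf'_le _ (Finset.mem_univ ((j, j') : Fin k × Fin k))
  set ε : ℝ := δ / L with hε
  have hεpos : 0 < ε := div_pos hδpos (by exact_mod_cast hLpos)
  have hεL : ε * L = δ := div_mul_cancel₀ δ (by positivity)
  set S : Fin n → Fin k → ℝ := fun i j => (E.map
    (fun e => (if ι e.1 e.2 = i ∧ e.2 = j then (1:ℝ) else 0)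
      - (if ι e.1 e.2 = i ∧ e.1 = j then (1:ℝ) else 0))).sum with hS
  set Q : Matrix (Fin n) (Fin k) ℝ := fun i j => P i j + ε * S i j with hQ
  have hQmem : Q ∈ scaledBirkhoff n k := by
    obtain ⟨hPnn, hProw, hPcol⟩ := hP
    refine ⟨?_, ?_, ?_⟩
    · intro i j
      by_cases hex : ∃ e ∈ E, ι e.1 e.2 = i ∧ e.1 = j
      · obtain ⟨e, heE, hei, hej⟩ := hex
        have hPij : δ ≤ P i j := by rw [← hei, ← hej]; exact hδle e.1 e.2
        have hlow : -(L : ℝ) ≤ S i j := by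
          have h1 : (E.map (fun _ => (-1 : ℝ))).sum
              ≤ (E.map (fun e => (if ι e.1 e.2 = i ∧ e.2 = j then (1:ℝ) else 0)
                - (if ι e.1 e.2 = i ∧ e.1 = j then (1:ℝ) else 0))).sum := by
            apply List.sum_le_sum
            intro e _
            split_ifs <;> norm_num
          have h2 : (E.map (fun _ => (-1 : ℝ))).sum = -(L : ℝ) := by
            simp [hL]
          rw [hS]; rw [h2] at h1; exact h1
        have : ε * (-(L:ℝ)) ≤ ε * S i j := mul_le_mul_of_nonneg_left hlow hεpos.le
        have h3 : ε * (-(L:ℝ)) = -δ := by rw [mul_neg, hεL]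
        rw [hQ]; dsimp only
        linarith
      · have hnn : 0 ≤ S i j := by
          apply List.sum_nonneg
          intro x hx
          obtain ⟨e, heE, rfl⟩ := List.mem_map.mp hx
          have hne : ¬(ι e.1 e.2 = i ∧ e.1 = j) := fun h => hex ⟨e, heE, h⟩
          rw [if_neg hne]
          split_ifs <;> norm_num
        have := mul_nonneg hεpos.le hnn
        have := hPnn i j
        rw [hQ]; dsimp only; linarith
    · intro i
      have hswap : ∑ j, S i j = (E.map (fun e => ∑ j : Fin k,
          ((if ι e.1 e.2 = i ∧ e.2 = j then (1:ℝ) else 0)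
            - (if ι e.1 e.2 = i ∧ e.1 = j then (1:ℝ) else 0)))).sum := by
        rw [hS]
        exact finset_sum_list_sum Finset.univ E _
      have hinner : ∀ e : Fin k × Fin k, ∑ j : Fin k,
          ((if ι e.1 e.2 = i ∧ e.2 = j then (1:ℝ) else 0)
            - (if ι e.1 e.2 = i ∧ e.1 = j then (1:ℝ) else 0)) = 0 := by
        intro e
        rw [Finset.sum_sub_distrib]
        by_cases hA : ι e.1 e.2 = i <;> simp [hA, Finset.sum_ite_eq]
      have : ∑ j, S i j = 0 := by
        rw [hswap]
        have : E.map (fun e => ∑ j : Fin k,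
          ((if ι e.1 e.2 = i ∧ e.2 = j then (1:ℝ) else 0)
            - (if ι e.1 e.2 = i ∧ e.1 = j then (1:ℝ) else 0))) = E.map (fun _ => (0:ℝ)) :=
          List.map_congr_left (fun e _ => hinner e)
        rw [this]; simp
      rw [hQ]; dsimp only
      rw [Finset.sum_add_distrib, hProw i, ← Finset.mul_sum, this, mul_zero, add_zero]
    · intro j
      have hswap : ∑ i, S i j = (E.map (fun e => ∑ i : Fin n,
          ((if ι e.1 e.2 = i ∧ e.2 = j then (1:ℝ) else 0)
            - (if ι e.1 e.2 = i ∧ e.1 = j then (1:ℝ) else 0)))).sum := by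
        rw [hS]
        exact finset_sum_list_sum Finset.univ E _
      have hinner : ∀ e : Fin k × Fin k, ∑ i : Fin n,
          ((if ι e.1 e.2 = i ∧ e.2 = j then (1:ℝ) else 0)
            - (if ι e.1 e.2 = i ∧ e.1 = j then (1:ℝ) else 0))
          = (if e.2 = j then (1:ℝ) else 0) - (if e.1 = j then (1:ℝ) else 0) := by
        intro e
        rw [Finset.sum_sub_distrib]
        congr 1 <;> simp [ite_and, Finset.sum_ite_eq, Fintype.sum_ite_eq]
      have hzero : ∑ i, S i j = 0 := by
        rw [hswap, List.map_congr_left (fun e (_ : e ∈ E) => hinner e),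
          list_sum_map_sub]
        rw [hE, zip_rotate_snd_sum c (fun x => if x = j then (1:ℝ) else 0)]
        ring
      rw [hQ]; dsimp only
      rw [Finset.sum_add_distrib, hPcol j, ← Finset.mul_sum, hzero, mul_zero, add_zero]
  -- cost computation
  have hcost := hopt Q hQmem
  have hkey : ∑ i, ∑ j, C i j * Q i j = (∑ i, ∑ j, C i j * P i j)
      + ε * (E.map (fun e => C (ι e.1 e.2) e.2 - C (ι e.1 e.2) e.1)).sum := by
    have expand : ∀ i j, C i j * Q i j = C i j * P i j + ε * (C i j * S i j) := by
      intro i j; rw [hQ]; dsimp only; ring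
    simp_rw [expand, Finset.sum_add_distrib, ← Finset.mul_sum]
    congr 1
    congr 1
    set G : Fin n → Fin k → (Fin k × Fin k) → ℝ := fun i j e =>
      C i j * ((if ι e.1 e.2 = i ∧ e.2 = j then (1:ℝ) else 0)
        - (if ι e.1 e.2 = i ∧ e.1 = j then (1:ℝ) else 0)) with hG
    have hCS : ∀ i j, C i j * S i j = (E.map (G i j)).sum := by
      intro i j
      rw [hS, hG, ← List.sum_map_mul_left]
    have h4 : ∀ e : Fin k × Fin k, ∑ i, ∑ j, G i j e
        = C (ι e.1 e.2) e.2 - C (ι e.1 e.2) e.1 := by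
      intro e
      have : ∀ i j, G i j e = C i j * (if ι e.1 e.2 = i ∧ e.2 = j then (1:ℝ) else 0)
          - C i j * (if ι e.1 e.2 = i ∧ e.1 = j then (1:ℝ) else 0) := by
        intro i j; rw [hG]; ring
      simp_rw [this, Finset.sum_sub_distrib]
      rw [double_sum_ite C (ι e.1 e.2) e.2, double_sum_ite C (ι e.1 e.2) e.1]
    calc ∑ i, ∑ j, C i j * S i j
        = ∑ i, (E.map (fun e => ∑ j, G i j e)).sum := by
          refine Finset.sum_congr rfl fun i _ => ?_
          simp_rw [hCS]
          exact finset_sum_list_sum Finset.univ E _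
      _ = (E.map (fun e => ∑ i, ∑ j, G i j e)).sum := finset_sum_list_sum Finset.univ E _
      _ = (E.map (fun e => C (ι e.1 e.2) e.2 - C (ι e.1 e.2) e.1)).sum := by
          rw [List.map_congr_left (fun e (_ : e ∈ E) => h4 e)]
  rw [hkey] at hcost
  have hT : 0 ≤ ε * (E.map (fun e => C (ι e.1 e.2) e.2 - C (ι e.1 e.2) e.1)).sum := by
    linarith
  have := nonneg_of_mul_nonneg_right hT hεpos
  exact this

end BirkhoffAux

open BirkhoffAux in
/-- for an optimal coupling `P*` for the squared Euclidean cost,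
there is a convex potential `Φ` such that every active target point `u_j`
(with `P*_{ij} > 0`) and the barycenter `n Σ_j P*_{ij} u_j` are subgradients
of `Φ` at `z_i`. -/
theorem exists_convex_potential_for_optimal_coupling (d n k : ℕ)
    (z : Fin n → EuclideanSpace ℝ (Fin d)) (u : Fin k → EuclideanSpace ℝ (Fin d))
    (P : Matrix (Fin n) (Fin k) ℝ) (hP : P ∈ scaledBirkhoff n k)
    (hopt : ∀ Q ∈ scaledBirkhoff n k,
      ∑ i, ∑ j, ‖z i - u j‖ ^ 2 * P i j ≤ ∑ i, ∑ j, ‖z i - u j‖ ^ 2 * Q i j) :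
    ∃ Φ : EuclideanSpace ℝ (Fin d) → ℝ,
      ConvexOn ℝ Set.univ Φ ∧
      ∀ i : Fin n,
        (∀ j : Fin k, 0 < P i j →
          ∀ z' : EuclideanSpace ℝ (Fin d), Φ z' ≥ Φ (z i) + ⟪u j, z' - z i⟫) ∧
        (∀ z' : EuclideanSpace ℝ (Fin d),
          Φ z' ≥ Φ (z i) + ⟪(n : ℝ) • ∑ j, P i j • u j, z' - z i⟫) := by
  classical
  rcases Nat.eq_zero_or_pos n with hn | hn
  · subst hn
    exact ⟨fun _ => 0, convexOn_const 0 convex_univ, fun i => i.elim0⟩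
  rcases Nat.eq_zero_or_pos k with hk | hk
  · exfalso
    subst hk
    have h0 := hP.2.1 ⟨0, hn⟩
    simp only [Finset.univ_eq_empty, Finset.sum_empty] at h0
    have : (0:ℝ) < 1 / n := by
      apply div_pos one_pos
      exact_mod_cast hn
    rw [← h0] at this
    exact lt_irrefl 0 this
  haveI : Nonempty (Fin k) := ⟨⟨0, hk⟩⟩
  haveI : Nonempty (Fin n) := ⟨⟨0, hn⟩⟩
  -- each column has positive support
  have hcol : ∀ j : Fin k, ∃ i, 0 < P i j := by
    intro j
    by_contra h
    push_neg at h
    have hz : ∑ i, P i j = 0 :=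
      Finset.sum_eq_zero fun i _ => le_antisymm (h i) (hP.1 i j)
    rw [hP.2.2 j] at hz
    have : (0:ℝ) < 1 / k := by
      apply div_pos one_pos
      exact_mod_cast hk
    rw [hz] at this
    exact lt_irrefl 0 this
  -- choose, for each pair (j,j'), a maximizer of ⟪z i, u j' - u j⟫ over the support of column j
  have hchoice : ∀ j j' : Fin k, ∃ i : Fin n, 0 < P i j ∧
      ∀ i' : Fin n, 0 < P i' j → ⟪z i', u j' - u j⟫ ≤ ⟪z i, u j' - u j⟫ := by
    intro j j'
    obtain ⟨i0, hi0⟩ := hcol j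
    obtain ⟨i, hi, hmax⟩ := Finset.exists_max_image
      (Finset.univ.filter (fun i => 0 < P i j)) (fun i => ⟪z i, u j' - u j⟫)
      ⟨i0, Finset.mem_filter.mpr ⟨Finset.mem_univ _, hi0⟩⟩
    refine ⟨i, (Finset.mem_filter.mp hi).2, fun i' hi' => ?_⟩
    exact hmax i' (Finset.mem_filter.mpr ⟨Finset.mem_univ _, hi'⟩)
  choose ι hι₁ hι₂ using hchoice
  set w : Fin k → Fin k → ℝ := fun j j' => ⟪z (ι j j'), u j' - u j⟫ with hw
  -- cyclical monotonicity
  have hcyc : ∀ (a : Fin k) (l : List (Fin k)), wsum w (a :: (l ++ [a])) ≤ 0 := by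
    intro a l
    have hx := exchange z u P hP hopt ι (fun j j' => hι₁ j j') (a :: l)
    set c : List (Fin k) := a :: l with hc
    set E : List (Fin k × Fin k) := c.zip (c.rotate 1) with hE
    have hdiff : ∀ e : Fin k × Fin k,
        ‖z (ι e.1 e.2) - u e.2‖ ^ 2 - ‖z (ι e.1 e.2) - u e.1‖ ^ 2
          = (‖u e.2‖ ^ 2 - ‖u e.1‖ ^ 2) - 2 * w e.1 e.2 := by
      intro e
      rw [norm_sub_sq_real, norm_sub_sq_real, hw]
      simp only [inner_sub_right (𝕜 := ℝ)]
      ring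
    rw [List.map_congr_left (fun e (_ : e ∈ E) => hdiff e)] at hx
    rw [list_sum_map_sub E (fun e => ‖u e.2‖ ^ 2 - ‖u e.1‖ ^ 2)
      (fun e => 2 * w e.1 e.2)] at hx
    rw [list_sum_map_sub E (fun e => ‖u e.2‖ ^ 2) (fun e => ‖u e.1‖ ^ 2)] at hx
    rw [hE, zip_rotate_snd_sum c (fun x => ‖u x‖ ^ 2)] at hx
    rw [List.sum_map_mul_left] at hx
    have hWs : ((c.zip (c.rotate 1)).map (fun e => w e.1 e.2)).sum ≤ 0 := by linarith
    rw [wsum_eq_zip_rotate w a l]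
    exact hWs
  obtain ⟨g, hg⟩ := exists_potential w hcyc
  -- the potential function
  set Φ : EuclideanSpace ℝ (Fin d) → ℝ :=
    fun x => Finset.univ.sup' Finset.univ_nonempty (fun j => ⟪u j, x⟫ - g j) with hΦ
  have hle : ∀ (j : Fin k) (x : EuclideanSpace ℝ (Fin d)), ⟪u j, x⟫ - g j ≤ Φ x :=
    fun j x => Finset.le_sup' (fun j => ⟪u j, x⟫ - g j) (Finset.mem_univ j)
  -- convexity
  have hconv : ConvexOn ℝ Set.univ Φ := by
    refine ⟨convex_univ, fun x _ y _ s t hs ht hst => ?_⟩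
    rw [hΦ]
    apply Finset.sup'_le
    intro j _
    have : ⟪u j, s • x + t • y⟫ - g j
        = s * (⟪u j, x⟫ - g j) + t * (⟪u j, y⟫ - g j) := by
      rw [inner_add_right (𝕜 := ℝ), real_inner_smul_right, real_inner_smul_right]
      have : s * g j + t * g j = g j := by rw [← add_mul, hst, one_mul]
      linarith [this]
    rw [this]
    exact add_le_add (mul_le_mul_of_nonneg_left (hle j x) hs)
      (mul_le_mul_of_nonneg_left (hle j y) ht)
  -- value of Φ at z i for supported pairs
  have hval : ∀ (i : Fin n) (j : Fin k), 0 < P i j → Φ (z i) = ⟪u j, z i⟫ - g j := by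
    intro i j hij
    refine le_antisymm ?_ (hle j (z i))
    apply Finset.sup'_le
    intro j' _
    have h1 : g j + w j j' ≤ g j' := hg j j'
    have h2 : ⟪z i, u j' - u j⟫ ≤ w j j' := hι₂ j j' i hij
    have h3 : ⟪z i, u j' - u j⟫ = ⟪u j', z i⟫ - ⟪u j, z i⟫ := by
      rw [inner_sub_right (𝕜 := ℝ), real_inner_comm (z i) (u j'),
        real_inner_comm (z i) (u j)]
    linarith
  -- individual subgradients
  have hsub : ∀ (i : Fin n) (j : Fin k), 0 < P i j →
      ∀ z' : EuclideanSpace ℝ (Fin d), Φ z' ≥ Φ (z i) + ⟪u j, z' - z i⟫ := by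
    intro i j hij z'
    have h1 : ⟪u j, z'⟫ - g j ≤ Φ z' := hle j z'
    have h2 : Φ (z i) = ⟪u j, z i⟫ - g j := hval i j hij
    have h3 : ⟪u j, z' - z i⟫ = ⟪u j, z'⟫ - ⟪u j, z i⟫ := inner_sub_right (𝕜 := ℝ) _ _ _
    rw [h2, h3]
    linarith
  refine ⟨Φ, hconv, fun i => ⟨fun j => hsub i j, ?_⟩⟩
  -- barycenter subgradient
  intro z'
  have hterm : ∀ j : Fin k, (n : ℝ) * P i j * ⟪u j, z' - z i⟫
      ≤ (n : ℝ) * P i j * (Φ z' - Φ (z i)) := by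
    intro j
    rcases lt_or_eq_of_le (hP.1 i j) with hij | hij
    · have h := hsub i j hij z'
      have : ⟪u j, z' - z i⟫ ≤ Φ z' - Φ (z i) := by linarith
      exact mul_le_mul_of_nonneg_left this
        (mul_nonneg (Nat.cast_nonneg n) hij.le)
    · rw [← hij, mul_zero, zero_mul, zero_mul]
  have hsumineq := Finset.sum_le_sum (fun j (_ : j ∈ Finset.univ) => hterm j)
  have hlhs : ∑ j, (n : ℝ) * P i j * ⟪u j, z' - z i⟫
      = ⟪(n : ℝ) • ∑ j, P i j • u j, z' - z i⟫ := by
    rw [real_inner_smul_left, sum_inner]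
    rw [Finset.mul_sum]
    refine Finset.sum_congr rfl fun j _ => ?_
    rw [real_inner_smul_left]
    ring
  have hrhs : ∑ j, (n : ℝ) * P i j * (Φ z' - Φ (z i)) = Φ z' - Φ (z i) := by
    have : ∑ j, (n : ℝ) * P i j * (Φ z' - Φ (z i))
        = (n : ℝ) * (∑ j, P i j) * (Φ z' - Φ (z i)) := by
      rw [Finset.mul_sum, Finset.sum_mul]
    rw [this, hP.2.1 i]
    have hne : (n : ℝ) ≠ 0 := by
      exact_mod_cast hn.ne'
    field_simp
  rw [hlhs, hrhs] at hsumineq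
  linarith
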